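/- Let q ∈ ℂ with q ≠ 0 and q^m ≠ 1 for every positive integer m. Let A₁₁, A₁₂, A₂₁, A₂₂ and A'₁₁, A'₁₂, A'₂₁, A'₂₂ be two representations of GL_q(2,ℂ) by 4×4 complex matrices whose 2×2 block matrices M = (A_ij) and M' = (A'_ij) over M₄(ℂ) are invertible. Then the inner actions a_ij · v := Σ_k M_{ik} v (M⁻¹)_{kj} and a_ij * v := Σ_k M'_{ik} v (M'⁻¹)_{kj} coincide (i.e. a_ij · v = a_ij * v for all v ∈ M₄(ℂ) and all i, j) if and only if there exist nonzero complex numbers α₁, α₂ such that A'₁₁ = α₁A₁₁, A'₂₁ = α₁A₂₁, A'₁₂ = α₂A₁₂ and A'₂₂ = α₂A₂₂. -/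

import Mathlib

section Aux

private abbrev M4' := Matrix (Fin 4) (Fin 4) ℂ

private lemma aux_scalar_of_commute (X : M4') (h : ∀ v : M4', X * v = v * X) :
    ∃ c : ℂ, X = c • (1 : M4') := by
  obtain ⟨c, hc⟩ := Matrix.mem_range_scalar_of_commute_single
    (M := X) (fun i j _ => ((h _).symm : _))
  exact ⟨c, by rw [← hc, Matrix.scalar_apply, Matrix.smul_eq_diagonal_mul, mul_one]⟩

private lemma aux_unit_kill (α : ℂ) (X : M4') (hX : IsUnit X) (h : α • X = 0) : α = 0 := by
  obtain ⟨u, rfl⟩ := hX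
  have h2 : α • ((u : M4') * (↑u⁻¹ : M4')) = 0 := by
    rw [← smul_mul_assoc, h, zero_mul]
  rw [u.mul_inv] at h2
  rcases smul_eq_zero.mp h2 with h | h
  · exact h
  · exact absurd h one_ne_zero

private lemma aux_unit_ne_zero (X : M4') (hX : IsUnit X) : X ≠ 0 := by
  rintro rfl
  exact one_ne_zero (isUnit_zero_iff.mp hX).symm

private lemma key_col (q s t : ℂ) (hq0 : q ≠ 0) (a b c d : M4')
    (hac : a*c = q•(c*a)) (hbd : b*d = q•(d*b)) (hbc : b*c = c*b)
    (had : a*d - d*a = (q - q⁻¹)•(b*c))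
    (h1 : (s•a + t•b) * (s•c + t•d) = q • ((s•c + t•d) * (s•a + t•b))) :
    (s*t*(1-q)) • (a*d - q•(b*c)) = 0 := by
  have hda : d*a = a*d - (q - q⁻¹)•(b*c) := by rw [← had]; abel
  have h3 : (s*t*(1-q)) • (a*d - q•(b*c)) =
      (s•a + t•b) * (s•c + t•d) - q • ((s•c + t•d) * (s•a + t•b)) := by
    simp only [add_mul, mul_add, smul_mul_smul_comm, hac, hbd, hda, ← hbc]
    match_scalars <;> field_simp <;> ring
  rw [h1, sub_self] at h3
  exact h3

end Aux

/-- A representation of the algebra `GL_q(2,ℂ)` by `n×n` complex matrices: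
the six defining relations together with invertibility of the quantum
determinant `A₁₁A₂₂ − qA₁₂A₂₁`. -/
def IsGLqRep {n : ℕ} (q : ℂ) (A₁₁ A₁₂ A₂₁ A₂₂ : Matrix (Fin n) (Fin n) ℂ) : Prop :=
  A₁₁ * A₁₂ = q • (A₁₂ * A₁₁) ∧
  A₁₁ * A₂₁ = q • (A₂₁ * A₁₁) ∧
  A₁₂ * A₂₂ = q • (A₂₂ * A₁₂) ∧
  A₂₁ * A₂₂ = q • (A₂₂ * A₂₁) ∧
  A₁₂ * A₂₁ = A₂₁ * A₁₂ ∧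
  A₁₁ * A₂₂ - A₂₂ * A₁₁ = (q - q⁻¹) • (A₁₂ * A₂₁) ∧
  IsUnit (A₁₁ * A₂₂ - q • (A₁₂ * A₂₁))


/-- two representations of `GL_q(2,ℂ)` in `M₄(ℂ)` define equal
inner actions iff their components are proportional column-wise. -/
theorem inner_actions_equal_iff (q : ℂ) (hq0 : q ≠ 0)
    (hq : ∀ m : ℕ, 0 < m → q ^ m ≠ 1)
    (A₁₁ A₁₂ A₂₁ A₂₂ A'₁₁ A'₁₂ A'₂₁ A'₂₂ : Matrix (Fin 4) (Fin 4) ℂ)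
    (hrep : IsGLqRep q A₁₁ A₁₂ A₂₁ A₂₂) (hrep' : IsGLqRep q A'₁₁ A'₁₂ A'₂₁ A'₂₂)
    (N N' : Matrix (Fin 2) (Fin 2) (Matrix (Fin 4) (Fin 4) ℂ))
    (hMN : !![A₁₁, A₁₂; A₂₁, A₂₂] * N = 1) (hNM : N * !![A₁₁, A₁₂; A₂₁, A₂₂] = 1)
    (hMN' : !![A'₁₁, A'₁₂; A'₂₁, A'₂₂] * N' = 1)
    (hNM' : N' * !![A'₁₁, A'₁₂; A'₂₁, A'₂₂] = 1) :
    (∀ (i j : Fin 2) (v : Matrix (Fin 4) (Fin 4) ℂ),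
        (∑ k, !![A₁₁, A₁₂; A₂₁, A₂₂] i k * v * N k j) =
          (∑ k, !![A'₁₁, A'₁₂; A'₂₁, A'₂₂] i k * v * N' k j)) ↔
    (∃ α₁ α₂ : ℂ, α₁ ≠ 0 ∧ α₂ ≠ 0 ∧
        A'₁₁ = α₁ • A₁₁ ∧ A'₂₁ = α₁ • A₂₁ ∧ A'₁₂ = α₂ • A₁₂ ∧ A'₂₂ = α₂ • A₂₂) := by
  obtain ⟨r1, r2, r3, r4, r5, r6, r7⟩ := hrep
  obtain ⟨p1, p2, p3, p4, p5, p6, p7⟩ := hrep'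
  have hq1 : q ≠ 1 := by simpa using hq 1 one_pos
  have hq1' : (1 : ℂ) - q ≠ 0 := sub_ne_zero.mpr (Ne.symm hq1)
  have hqq : q - q⁻¹ ≠ 0 := by
    intro h0
    apply hq 2 two_pos
    have h1 : q = q⁻¹ := sub_eq_zero.mp h0
    rw [sq]
    nth_rewrite 2 [h1]
    exact mul_inv_cancel₀ hq0
  constructor
  · intro h
    set M : Matrix (Fin 2) (Fin 2) M4' := !![A₁₁, A₁₂; A₂₁, A₂₂] with hM
    set M' : Matrix (Fin 2) (Fin 2) M4' := !![A'₁₁, A'₁₂; A'₂₁, A'₂₂] with hM'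
    have hMat : ∀ v : M4', M * (Matrix.diagonal (fun _ => v) * N)
        = M' * (Matrix.diagonal (fun _ => v) * N') := by
      intro v
      refine Matrix.ext fun i j => ?_
      simpa only [Matrix.mul_apply, Matrix.diagonal_apply, ite_mul, zero_mul,
        Finset.sum_ite_eq, Finset.mem_univ, if_true, mul_assoc] using h i j v
    have hQcomm : ∀ v : M4', (N * M') * Matrix.diagonal (fun _ => v)
        = Matrix.diagonal (fun _ => v) * (N * M') := by
      intro v
      calc N * M' * Matrix.diagonal (fun _ => v)
          = N * ((M' * (Matrix.diagonal (fun _ => v) * N')) * M') := by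
            simp only [mul_assoc, hNM', mul_one]
        _ = N * ((M * (Matrix.diagonal (fun _ => v) * N)) * M') := by rw [← hMat]
        _ = Matrix.diagonal (fun _ => v) * (N * M') := by
            simp only [← mul_assoc, hNM, one_mul]
    have hQc : ∀ (i j : Fin 2) (v : M4'), (N * M') i j * v = v * (N * M') i j := by
      intro i j v
      have := congrArg (fun X => X i j) (hQcomm v)
      simpa only [Matrix.mul_diagonal, Matrix.diagonal_mul] using this
    obtain ⟨s, hs⟩ := aux_scalar_of_commute _ (hQc 0 0)
    obtain ⟨u, hu⟩ := aux_scalar_of_commute _ (hQc 0 1)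
    obtain ⟨t, ht⟩ := aux_scalar_of_commute _ (hQc 1 0)
    obtain ⟨w, hw⟩ := aux_scalar_of_commute _ (hQc 1 1)
    have hQlit : N * M' = !![s•(1:M4'), u•1; t•1, w•1] := by
      rw [Matrix.eta_fin_two (N * M'), hs, hu, ht, hw]
    have hMQ : M' = M * !![s•(1:M4'), u•1; t•1, w•1] := by
      rw [← hQlit, ← mul_assoc, hMN, one_mul]
    rw [hM, hM', Matrix.mul_fin_two] at hMQ
    have e11 : A'₁₁ = s • A₁₁ + t • A₁₂ := by
      simpa [mul_smul_comm] using congrArg (fun X => X 0 0) hMQ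
    have e12 : A'₁₂ = u • A₁₁ + w • A₁₂ := by
      simpa [mul_smul_comm] using congrArg (fun X => X 0 1) hMQ
    have e21 : A'₂₁ = s • A₂₁ + t • A₂₂ := by
      simpa [mul_smul_comm] using congrArg (fun X => X 1 0) hMQ
    have e22 : A'₂₂ = u • A₂₁ + w • A₂₂ := by
      simpa [mul_smul_comm] using congrArg (fun X => X 1 1) hMQ
    -- st = 0 and uw = 0
    have hst : s * t = 0 := by
      have hk := key_col q s t hq0 A₁₁ A₁₂ A₂₁ A₂₂ r2 r3 r5 r6
        (by rw [← e11, ← e21]; exact p2)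
      have := aux_unit_kill _ _ r7 hk
      rcases mul_eq_zero.mp this with h' | h'
      · exact h'
      · exact absurd h' hq1'
    have huw : u * w = 0 := by
      have hk := key_col q u w hq0 A₁₁ A₁₂ A₂₁ A₂₂ r2 r3 r5 r6
        (by rw [← e12, ← e22]; exact p3)
      have := aux_unit_kill _ _ r7 hk
      rcases mul_eq_zero.mp this with h' | h'
      · exact h'
      · exact absurd h' hq1'
    have hD'ne : A'₁₁ * A'₂₂ - q • (A'₁₂ * A'₂₁) ≠ 0 := aux_unit_ne_zero _ p7
    rcases mul_eq_zero.mp hst with hs0 | ht0 <;> rcases mul_eq_zero.mp huw with hu0 | hw0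
    · -- s = 0, u = 0 : contradiction
      rw [hs0] at e11 e21; rw [hu0] at e12 e22
      simp only [zero_smul, zero_add] at e11 e12 e21 e22
      exfalso
      apply hD'ne
      have F0 := p5
      rw [e12, e21] at F0
      simp only [smul_mul_smul_comm] at F0
      rw [r3] at F0
      rw [e11, e12, e21, e22]
      simp only [smul_mul_smul_comm, r3]
      rw [F0]
      module
    · -- s = 0, w = 0 : contradiction
      rw [hs0] at e11 e21; rw [hw0] at e12 e22
      simp only [zero_smul, zero_add, add_zero] at e11 e12 e21 e22
      exfalso
      apply hD'ne
      -- F0 : (u*t)•(A₁₁*A₂₂) = (t*u)•(A₂₂*A₁₁)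
      have F0 := p5
      rw [e12, e21] at F0
      simp only [smul_mul_smul_comm] at F0
      -- F2 from p6
      have F2 := p6
      rw [e11, e12, e21, e22] at F2
      simp only [smul_mul_smul_comm, r5] at F2
      -- F2 : (t*u)•(A₂₁*A₁₂) - (u*t)•(A₂₁*A₁₂) = (q-q⁻¹)•((u*t)•(A₁₁*A₂₂))
      have hx0 : (u*t) • (A₁₁*A₂₂) = 0 := by
        have hz : (q - q⁻¹) • ((u*t) • (A₁₁*A₂₂)) = 0 := by
          rw [← F2]; module
        rcases smul_eq_zero.mp hz with h' | h'
        · exact absurd h' hqq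
        · exact h'
      have hy0 : (t*u) • (A₂₂*A₁₁) = 0 := by rw [← F0]; exact hx0
      have hz0 : (u*t) • (A₁₂*A₂₁) = 0 := by
        have hh := congrArg (fun X => (u*t) • X) r6
        simp only [smul_sub] at hh
        rw [hx0, show (u*t) • (A₂₂*A₁₁) = 0 from by rw [mul_comm u t]; exact hy0] at hh
        have hz : (q - q⁻¹) • ((u*t) • (A₁₂*A₂₁)) = 0 := by
          rw [smul_comm, ← hh]; simp
        rcases smul_eq_zero.mp hz with h' | h'
        · exact absurd h' hqq
        · exact h'
      rw [e11, e12, e21, e22]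
      simp only [smul_mul_smul_comm]
      rw [hx0, show (t*u) • (A₁₂*A₂₁) = 0 from by rw [mul_comm t u]; exact hz0]
      simp
    · -- t = 0, u = 0 : the good case
      rw [ht0] at e11 e21; rw [hu0] at e12 e22
      simp only [zero_smul, zero_add, add_zero] at e11 e12 e21 e22
      have hD' : A'₁₁ * A'₂₂ - q • (A'₁₂ * A'₂₁)
          = (s*w) • (A₁₁ * A₂₂ - q • (A₁₂ * A₂₁)) := by
        rw [e11, e12, e21, e22]; simp only [smul_mul_smul_comm]; module
      have hsw : s * w ≠ 0 := by
        intro h0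
        exact hD'ne (by rw [hD', h0, zero_smul])
      refine ⟨s, w, (mul_ne_zero_iff.mp hsw).1, (mul_ne_zero_iff.mp hsw).2,
        e11, e21, e12, e22⟩
    · -- t = 0, w = 0 : contradiction
      rw [ht0] at e11 e21; rw [hw0] at e12 e22
      simp only [zero_smul, zero_add, add_zero] at e11 e12 e21 e22
      exfalso
      apply hD'ne
      have F0 := p5
      rw [e12, e21] at F0
      simp only [smul_mul_smul_comm] at F0
      rw [r2] at F0
      rw [e11, e12, e21, e22]
      simp only [smul_mul_smul_comm, r2]
      rw [F0]
      module
  · rintro ⟨α₁, α₂, h₁, h₂, rfl, rfl, rfl, rfl⟩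
    intro i j v
    have hfac : !![α₁ • A₁₁, α₂ • A₁₂; α₁ • A₂₁, α₂ • A₂₂]
        = !![A₁₁, A₁₂; A₂₁, A₂₂] * !![α₁ • (1:M4'), 0; 0, α₂ • 1] := by
      rw [Matrix.mul_fin_two]
      refine Matrix.ext fun i j => ?_
      fin_cases i <;> fin_cases j <;> simp [mul_smul_comm]
    have hDDinv : !![α₁ • (1:M4'), 0; 0, α₂ • 1] * !![α₁⁻¹ • (1:M4'), 0; 0, α₂⁻¹ • 1] = 1 := by
      rw [Matrix.mul_fin_two]
      refine Matrix.ext fun i j => ?_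
      fin_cases i <;> fin_cases j <;>
        simp [smul_smul, mul_inv_cancel₀ h₁, mul_inv_cancel₀ h₂, inv_mul_cancel₀ h₁,
          inv_mul_cancel₀ h₂, Matrix.one_apply]
    have hMfac : !![A₁₁, A₁₂; A₂₁, A₂₂]
        = !![α₁ • A₁₁, α₂ • A₁₂; α₁ • A₂₁, α₂ • A₂₂] * !![α₁⁻¹ • (1:M4'), 0; 0, α₂⁻¹ • 1] := by
      rw [hfac, mul_assoc, hDDinv, mul_one]
    have hN' : N' = !![α₁⁻¹ • (1:M4'), 0; 0, α₂⁻¹ • 1] * N := by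
      calc N' = N' * (!![A₁₁, A₁₂; A₂₁, A₂₂] * N) := by rw [hMN, mul_one]
        _ = N' * ((!![α₁ • A₁₁, α₂ • A₁₂; α₁ • A₂₁, α₂ • A₂₂]
              * !![α₁⁻¹ • (1:M4'), 0; 0, α₂⁻¹ • 1]) * N) := by rw [← hMfac]
        _ = (N' * !![α₁ • A₁₁, α₂ • A₁₂; α₁ • A₂₁, α₂ • A₂₂])
              * (!![α₁⁻¹ • (1:M4'), 0; 0, α₂⁻¹ • 1] * N) := by simp only [mul_assoc]
        _ = !![α₁⁻¹ • (1:M4'), 0; 0, α₂⁻¹ • 1] * N := by rw [hNM', one_mul]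
    rw [hN']
    fin_cases i <;> fin_cases j <;>
      simp [Fin.sum_univ_two, Matrix.mul_apply, smul_mul_assoc, mul_smul_comm, smul_smul,
        mul_inv_cancel₀ h₁, mul_inv_cancel₀ h₂, inv_mul_cancel₀ h₁, inv_mul_cancel₀ h₂]
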